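/- Define G(x, t) = √2 ν ∫₀^{2t/x²} (√(2t − x² s)/(π s^{3/2})) e^{−1/(2s)} ds for x ≠ 0, t > 0, ν > 0. Then the partial derivative ∂G/∂x satisfies |∂G/∂x(x, t)| ≤ 2ν for all x ≠ 0 and t > 0. -/

import Mathlib

open MeasureTheory Real

/-- The covariance contribution function `G(x,t)` of the Howitt-Warren 2-point motion,
with stickiness parameter `ν`. -/
noncomputable def Gfun (ν x t : ℝ) : ℝ :=
  Real.sqrt 2 * ν * ∫ s in Set.Ioc (0:ℝ) (2 * t / x ^ 2),
    Real.sqrt (2 * t - x ^ 2 * s) / (Real.pi * s ^ ((3:ℝ)/2)) * Real.exp (-1 / (2 * s))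

namespace GfunAux
open Set MeasureTheory intervalIntegral Real Filter

noncomputable def phi (T x u : ℝ) : ℝ :=
  Real.sqrt (T - u) / (Real.pi * (u * Real.sqrt u)) * (x * Real.exp (-x ^ 2 / (2 * u)))

noncomputable def phi' (T x u : ℝ) : ℝ :=
  Real.sqrt (T - u) / (Real.pi * (u * Real.sqrt u)) *
    ((1 - x ^ 2 / u) * Real.exp (-x ^ 2 / (2 * u)))

noncomputable def rho (T x u : ℝ) : ℝ :=
  Real.exp (-x ^ 2 / (2 * u)) / (Real.pi * (Real.sqrt u * Real.sqrt (T - u)))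

lemma exp_bound {c u : ℝ} (hc : 0 < c) (hu : 0 < u) :
    Real.exp (-(c / u)) ≤ 27 * u ^ 3 / c ^ 3 := by
  have h2 : c ^ 3 / (27 * u ^ 3) ≤ Real.exp (c / u) := by
    have h3 : (c / (3 * u)) ^ 3 ≤ Real.exp (c / (3 * u)) ^ 3 :=
      pow_le_pow_left₀ (by positivity)
        (by linarith [Real.add_one_le_exp (c/(3*u)),
          div_pos hc (by linarith : (0:ℝ) < 3*u)]) 3
    calc c ^ 3 / (27 * u ^ 3) = (c / (3 * u)) ^ 3 := by ring
      _ ≤ Real.exp (c / (3 * u)) ^ 3 := h3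
      _ = Real.exp (3 * (c / (3 * u))) := by rw [← Real.exp_nat_mul]; norm_num
      _ = Real.exp (c / u) := by congr 1; field_simp
  rw [Real.exp_neg]
  calc (Real.exp (c/u))⁻¹ ≤ (c ^ 3 / (27 * u ^ 3))⁻¹ := inv_anti₀ (by positivity) h2
    _ = 27 * u ^ 3 / c ^ 3 := by rw [inv_div]

lemma bound_gen {T b c u : ℝ} (hc : 0 < c) (hb : 0 ≤ b) (hu : 0 < u) (huT : u ≤ T) :
    Real.sqrt (T - u) / (Real.pi * (u * Real.sqrt u)) * ((1 + b / u) * Real.exp (-(c / u)))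
      ≤ 27 * (T ^ 2 + b * T) / (Real.pi * c ^ 3) := by
  have hπ := Real.pi_pos
  have hsu := Real.sqrt_pos.2 hu
  have hT : 0 < T := lt_of_lt_of_le hu huT
  have hsT := Real.sqrt_pos.2 hT
  have hsuu : Real.sqrt u * Real.sqrt u = u := Real.mul_self_sqrt hu.le
  have hsTT : Real.sqrt T * Real.sqrt T = T := Real.mul_self_sqrt hT.le
  have hsuT : Real.sqrt u ≤ Real.sqrt T := Real.sqrt_le_sqrt huT
  have hstu : Real.sqrt (T - u) ≤ Real.sqrt T := by
    apply Real.sqrt_le_sqrt; linarith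
  have hstu0 : 0 ≤ Real.sqrt (T - u) := Real.sqrt_nonneg _
  have he := exp_bound hc hu
  have he0 := (Real.exp_pos (-(c/u))).le
  have key1 : Real.sqrt (T - u) * ((1 + b / u) * Real.exp (-(c / u)))
      ≤ Real.sqrt T * ((1 + b / u) * (27 * u ^ 3 / c ^ 3)) :=
    mul_le_mul hstu (mul_le_mul_of_nonneg_left he (by positivity)) (by positivity)
      (by positivity)
  have key2 : Real.sqrt T * u ^ 2 ≤ T ^ 2 * Real.sqrt u := by
    have p3 : Real.sqrt u ^ 3 ≤ Real.sqrt T ^ 3 := pow_le_pow_left₀ hsu.le hsuT 3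
    have e1 : Real.sqrt T * u ^ 2 = Real.sqrt u ^ 3 * (Real.sqrt u * Real.sqrt T) := by
      linear_combination (-(Real.sqrt T * (u + Real.sqrt u * Real.sqrt u))) * hsuu
    have e2 : T ^ 2 * Real.sqrt u = Real.sqrt T ^ 3 * (Real.sqrt u * Real.sqrt T) := by
      linear_combination (-(Real.sqrt u * (T + Real.sqrt T * Real.sqrt T))) * hsTT
    rw [e1, e2]
    exact mul_le_mul_of_nonneg_right p3 (by positivity)
  have key3 : Real.sqrt T * u ≤ T * Real.sqrt u := by
    have e1 : Real.sqrt T * u = Real.sqrt u * (Real.sqrt u * Real.sqrt T) := by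
      linear_combination (-Real.sqrt T) * hsuu
    have e2 : T * Real.sqrt u = Real.sqrt T * (Real.sqrt u * Real.sqrt T) := by
      linear_combination (-Real.sqrt u) * hsTT
    rw [e1, e2]
    exact mul_le_mul_of_nonneg_right hsuT (by positivity)
  rw [div_mul_eq_mul_div, div_le_div_iff₀ (by positivity) (by positivity)]
  have expand : Real.sqrt T * ((1 + b / u) * (27 * u ^ 3 / c ^ 3)) * (Real.pi * c ^ 3)
      = 27 * Real.pi * (Real.sqrt T * u ^ 2 * u + b * (Real.sqrt T * u) * u) := by
    field_simp
  calc Real.sqrt (T - u) * ((1 + b / u) * Real.exp (-(c / u))) * (Real.pi * c ^ 3)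
      ≤ Real.sqrt T * ((1 + b / u) * (27 * u ^ 3 / c ^ 3)) * (Real.pi * c ^ 3) := by
        apply mul_le_mul_of_nonneg_right key1 (by positivity)
    _ = 27 * Real.pi * (Real.sqrt T * u ^ 2 * u + b * (Real.sqrt T * u) * u) := expand
    _ ≤ 27 * (T ^ 2 + b * T) * (Real.pi * (u * Real.sqrt u)) := by
        have h1 : Real.sqrt T * u ^ 2 * u ≤ T ^ 2 * Real.sqrt u * u :=
          mul_le_mul_of_nonneg_right key2 hu.le
        have h2 : b * (Real.sqrt T * u) * u ≤ b * (T * Real.sqrt u) * u :=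
          mul_le_mul_of_nonneg_right (mul_le_mul_of_nonneg_left key3 hb) hu.le
        nlinarith [mul_le_mul_of_nonneg_left (add_le_add h1 h2) hπ.le]

lemma meas_phi (T x : ℝ) : Measurable (phi T x) := by unfold phi; fun_prop
lemma meas_phi' (T x : ℝ) : Measurable (phi' T x) := by unfold phi'; fun_prop
lemma meas_rho (T x : ℝ) : Measurable (rho T x) := by unfold rho; fun_prop

lemma rho_nonneg (T x u : ℝ) : 0 ≤ rho T x u := by unfold rho; positivity

lemma rep {ν x t : ℝ} (hx : 0 < x) (ht : 0 < t) :
    Gfun ν x t = Real.sqrt 2 * ν * ∫ u in Set.Ioc (0:ℝ) (2 * t), phi (2 * t) x u := by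
  have hx2 : (0:ℝ) < x ^ 2 := by positivity
  unfold Gfun
  congr 1
  set g : ℝ → ℝ := fun s => Real.sqrt (2 * t - x ^ 2 * s) / (Real.pi * s ^ ((3:ℝ)/2)) *
    Real.exp (-1 / (2 * s)) with hg
  rw [← intervalIntegral.integral_of_le (by positivity : (0:ℝ) ≤ 2 * t / x ^ 2),
      ← intervalIntegral.integral_of_le (by positivity : (0:ℝ) ≤ 2 * t)]
  have hc := intervalIntegral.integral_comp_div (a := (0:ℝ)) (b := 2 * t) (f := g)
    (ne_of_gt hx2)
  rw [zero_div] at hc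
  have h1 : (∫ s in (0:ℝ)..(2 * t / x ^ 2), g s)
      = (x ^ 2)⁻¹ • ∫ u in (0:ℝ)..(2 * t), g (u / x ^ 2) := by
    rw [hc, smul_smul, inv_mul_cancel₀ (ne_of_gt hx2), one_smul]
  rw [h1, ← intervalIntegral.integral_smul,
    intervalIntegral.integral_of_le (by positivity : (0:ℝ) ≤ 2 * t),
    intervalIntegral.integral_of_le (by positivity : (0:ℝ) ≤ 2 * t)]
  apply setIntegral_congr_fun measurableSet_Ioc
  intro u hu
  obtain ⟨hu0, huT⟩ := hu
  have hsu : (0:ℝ) < Real.sqrt u := Real.sqrt_pos.2 hu0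
  have hπ := Real.pi_pos
  simp only [smul_eq_mul, hg, phi]
  have e1 : x ^ 2 * (u / x ^ 2) = u := by field_simp
  have e2 : (u / x ^ 2) ^ ((3:ℝ)/2) = u * Real.sqrt u / (x ^ 2 * x) := by
    rw [Real.div_rpow hu0.le (by positivity),
      show (3:ℝ)/2 = 1 + 1/2 by norm_num, Real.rpow_add hu0, Real.rpow_one,
      ← Real.sqrt_eq_rpow, Real.rpow_add hx2, Real.rpow_one, ← Real.sqrt_eq_rpow,
      Real.sqrt_sq hx.le]
  have e3 : (-1 : ℝ) / (2 * (u / x ^ 2)) = -x ^ 2 / (2 * u) := by field_simp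
  rw [e1, e2, e3]
  have hx0 : x ≠ 0 := ne_of_gt hx
  field_simp

lemma phi_nonneg (T x u : ℝ) (hx : 0 ≤ x) (hu : 0 ≤ u) : 0 ≤ phi T x u := by
  unfold phi; positivity

lemma phi_le {T x u : ℝ} (hx : 0 < x) (hu : 0 < u) (huT : u ≤ T) :
    phi T x u ≤ x * (27 * (T ^ 2 + 0 * T) / (Real.pi * (x ^ 2 / 2) ^ 3)) := by
  have hb := bound_gen (c := x^2/2) (b := 0) (half_pos (pow_pos hx 2)) le_rfl hu huT
  have harg : -x ^ 2 / (2 * u) = -(x ^ 2 / 2 / u) := by ring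
  unfold phi
  rw [harg]
  calc Real.sqrt (T - u) / (Real.pi * (u * Real.sqrt u)) * (x * Real.exp (-(x ^ 2 / 2 / u)))
      = x * (Real.sqrt (T - u) / (Real.pi * (u * Real.sqrt u)) *
          ((1 + 0 / u) * Real.exp (-(x ^ 2 / 2 / u)))) := by ring
    _ ≤ x * (27 * (T ^ 2 + 0 * T) / (Real.pi * (x ^ 2 / 2) ^ 3)) :=
        mul_le_mul_of_nonneg_left hb hx.le

lemma abs_phi'_le {T x u : ℝ} (hxx : 0 < x^2) (hu : 0 < u) (huT : u ≤ T) :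
    |phi' T x u| ≤ 27 * (T ^ 2 + x ^ 2 * T) / (Real.pi * (x ^ 2 / 2) ^ 3) := by
  have hb := bound_gen (c := x^2/2) (b := x^2) (half_pos hxx) hxx.le hu huT
  have harg : -x ^ 2 / (2 * u) = -(x ^ 2 / 2 / u) := by ring
  refine le_trans ?_ hb
  unfold phi'
  rw [harg, abs_mul, abs_mul]
  have h0 : 0 ≤ Real.sqrt (T - u) / (Real.pi * (u * Real.sqrt u)) := by positivity
  rw [abs_of_nonneg h0, abs_of_nonneg (Real.exp_pos _).le]
  apply mul_le_mul_of_nonneg_left ?_ h0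
  apply mul_le_mul_of_nonneg_right ?_ (Real.exp_pos _).le
  rw [abs_le]
  constructor
  · have : 0 ≤ x^2/u := by positivity
    linarith
  · have : 0 ≤ x^2/u := by positivity
    linarith

lemma integrable_phi {T x : ℝ} (hT : 0 < T) (hx : 0 < x) :
    IntegrableOn (phi T x) (Set.Ioc (0:ℝ) T) := by
  apply Measure.integrableOn_of_bounded (M := x * (27 * (T ^ 2 + 0 * T) / (Real.pi * (x ^ 2 / 2) ^ 3)))
    (measure_Ioc_lt_top).ne ((meas_phi T x).aestronglyMeasurable)
  filter_upwards [ae_restrict_mem measurableSet_Ioc] with u hu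
  rw [Real.norm_eq_abs, abs_of_nonneg (phi_nonneg T x u hx.le hu.1.le)]
  exact phi_le hx hu.1 hu.2

lemma integrable_phi' {T x : ℝ} (hT : 0 < T) (hx : 0 < x) :
    IntegrableOn (phi' T x) (Set.Ioc (0:ℝ) T) := by
  apply Measure.integrableOn_of_bounded (M := 27 * (T ^ 2 + x ^ 2 * T) / (Real.pi * (x ^ 2 / 2) ^ 3))
    (measure_Ioc_lt_top).ne ((meas_phi' T x).aestronglyMeasurable)
  filter_upwards [ae_restrict_mem measurableSet_Ioc] with u hu
  exact abs_phi'_le (pow_pos hx 2) hu.1 hu.2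

lemma hasDerivAt_phi {T u : ℝ} (hu : 0 < u) (y : ℝ) :
    HasDerivAt (fun y => phi T y u) (phi' T y u) y := by
  have hu2 : (2:ℝ) * u ≠ 0 := by positivity
  have h1 : HasDerivAt (fun y : ℝ => -y ^ 2 / (2 * u)) (-((2:ℕ) * y ^ 1) / (2 * u)) y :=
    ((hasDerivAt_pow 2 y).neg).div_const (2 * u)
  have h2 := h1.exp
  have h3 := (hasDerivAt_id y).mul h2
  have h4 := h3.const_mul (Real.sqrt (T - u) / (Real.pi * (u * Real.sqrt u)))
  refine h4.congr_deriv (Eq.symm ?_)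
  unfold phi'
  have hu0 : u ≠ 0 := ne_of_gt hu
  simp only [id]
  field_simp
  ring

lemma hasDerivAt_int {T x : ℝ} (hT : 0 < T) (hx : 0 < x) :
    HasDerivAt (fun y => ∫ u in Set.Ioc (0:ℝ) T, phi T y u)
      (∫ u in Set.Ioc (0:ℝ) T, phi' T x u) x := by
  have hx8 : (0:ℝ) < x ^ 2 / 8 := by positivity
  set bound : ℝ → ℝ := fun u =>
    Real.sqrt (T - u) / (Real.pi * (u * Real.sqrt u)) *
      ((1 + 3 * x ^ 2 / u) * Real.exp (-(x ^ 2 / 8 / u))) with hbound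
  have key := hasDerivAt_integral_of_dominated_loc_of_deriv_le
    (μ := volume.restrict (Set.Ioc (0:ℝ) T))
    (F := fun y u => phi T y u) (F' := fun y u => phi' T y u) (x₀ := x)
    (bound := bound) (Metric.ball_mem_nhds x (half_pos hx))
    (Filter.Eventually.of_forall fun y => (meas_phi T y).aestronglyMeasurable)
    (integrable_phi hT hx)
    ((meas_phi' T x).aestronglyMeasurable)
    ?_ ?_ ?_
  · exact key.2
  · -- bound
    filter_upwards [ae_restrict_mem measurableSet_Ioc] with u hu y hy
    obtain ⟨hu0, huT⟩ := hu
    rw [Metric.mem_ball, Real.dist_eq, abs_lt] at hy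
    have hy1 : x / 2 < y := by linarith [hy.1]
    have hy2 : y < 3 * x / 2 := by linarith [hy.2]
    have hy0 : 0 < y := lt_trans (half_pos hx) hy1
    have hysq : y ^ 2 ≤ 3 * x ^ 2 := by nlinarith
    have hysq2 : x ^ 2 / 8 ≤ y ^ 2 / 2 := by nlinarith
    have h0 : 0 ≤ Real.sqrt (T - u) / (Real.pi * (u * Real.sqrt u)) := by positivity
    rw [Real.norm_eq_abs]
    unfold phi'
    rw [abs_mul, abs_mul, abs_of_nonneg h0, abs_of_nonneg (Real.exp_pos _).le, hbound]
    apply mul_le_mul_of_nonneg_left ?_ h0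
    apply mul_le_mul ?_ ?_ (Real.exp_pos _).le (by positivity)
    · rw [abs_le]
      have h1 : 0 ≤ y ^ 2 / u := by positivity
      have h2 : y ^ 2 / u ≤ 3 * x ^ 2 / u := by gcongr
      constructor <;> linarith
    · rw [Real.exp_le_exp, show -y ^ 2 / (2 * u) = -(y ^ 2 / 2 / u) by ring, neg_le_neg_iff]
      gcongr
  · -- integrability of bound
    have hbm : Measurable bound := by unfold bound; fun_prop
    refine Measure.integrableOn_of_bounded
      (M := 27 * (T ^ 2 + 3 * x ^ 2 * T) / (Real.pi * (x ^ 2 / 8) ^ 3))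
      (measure_Ioc_lt_top).ne hbm.aestronglyMeasurable ?_
    filter_upwards [ae_restrict_mem measurableSet_Ioc] with u hu
    obtain ⟨hu0, huT⟩ := hu
    have h0 : (0:ℝ) ≤ bound u := by
      rw [hbound]
      have := hu0.le
      positivity
    rw [Real.norm_eq_abs, abs_of_nonneg h0]
    exact bound_gen hx8 (by positivity) hu0 huT
  · -- differentiability
    filter_upwards [ae_restrict_mem measurableSet_Ioc] with u hu y _
    exact hasDerivAt_phi hu.1 y

noncomputable def Bf (T x u : ℝ) : ℝ :=
  -(2 / Real.pi) * (Real.sqrt (T - u) / Real.sqrt u) * Real.exp (-x ^ 2 / (2 * u))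

lemma hasDerivAt_Bf {T x u : ℝ} (hu : 0 < u) (huT : u < T) :
    HasDerivAt (Bf T x) (phi' T x u + rho T x u) u := by
  have hTu : 0 < T - u := by linarith
  have hsu : 0 < Real.sqrt u := Real.sqrt_pos.2 hu
  have hsb : 0 < Real.sqrt (T - u) := Real.sqrt_pos.2 hTu
  have hπ := Real.pi_pos
  have s1 : HasDerivAt (fun u : ℝ => Real.sqrt (T - u))
      (1 / (2 * Real.sqrt (T - u)) * (0 - 1)) u :=
    (Real.hasDerivAt_sqrt (ne_of_gt hTu)).comp u ((hasDerivAt_const u T).sub (hasDerivAt_id u))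
  have s2 : HasDerivAt Real.sqrt (1 / (2 * Real.sqrt u)) u := Real.hasDerivAt_sqrt (ne_of_gt hu)
  have q := s1.div s2 (ne_of_gt hsu)
  have e1 : HasDerivAt (fun u : ℝ => -x ^ 2 / (2 * u)) (-x ^ 2 * (-(2 * 1) / (2 * u) ^ 2)) u := by
    have h := (((hasDerivAt_id u).const_mul (2:ℝ)).inv (by positivity)).const_mul (-x ^ 2)
    simp only [id] at h
    exact h.congr_of_eventuallyEq (Filter.Eventually.of_forall fun v => by
      dsimp only; rw [div_eq_mul_inv]; rfl)
  have e2 := e1.exp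
  have full := (q.mul e2).const_mul (-(2 / Real.pi))
  refine HasDerivAt.congr_of_eventuallyEq
    (f := fun y => -(2 / Real.pi) * (Real.sqrt (T - y) / Real.sqrt y * Real.exp (-x ^ 2 / (2 * y))))
    ?_ (Filter.Eventually.of_forall fun v => by unfold Bf; ring)
  refine full.congr_deriv (Eq.symm ?_)
  unfold phi' rho
  have hsuu : Real.sqrt u * Real.sqrt u = u := Real.mul_self_sqrt hu.le
  have hstt : Real.sqrt (T - u) * Real.sqrt (T - u) = T - u := Real.mul_self_sqrt hTu.le
  set E := Real.exp (-x ^ 2 / (2 * u)) with hE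
  simp only [Pi.div_apply]
  field_simp
  linear_combination (E * Real.sqrt (T - u) ^ 2 * u) * hsuu

lemma Bf_zero {T x : ℝ} : Bf T x 0 = 0 := by
  unfold Bf; rw [Real.sqrt_zero, div_zero, mul_zero, zero_mul]

lemma Bf_T {T x : ℝ} : Bf T x T = 0 := by
  unfold Bf; rw [sub_self, Real.sqrt_zero, zero_div, mul_zero, zero_mul]

lemma contOn_Bf {T x : ℝ} (hT : 0 < T) (hx : 0 < x) :
    ContinuousOn (Bf T x) (Set.Icc 0 T) := by
  intro u hu
  rcases eq_or_lt_of_le hu.1 with h0 | h0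
  · -- u = 0
    rw [ContinuousWithinAt, ← h0, Bf_zero]
    set C := 2 / Real.pi * Real.sqrt T * (27 / (x ^ 2 / 2) ^ 3) with hC
    apply squeeze_zero_norm' (a := fun v => C * (v ^ 2 * Real.sqrt v))
    · filter_upwards [self_mem_nhdsWithin] with v hv
      rcases eq_or_lt_of_le hv.1 with hv0 | hv0
      · rw [← hv0, Bf_zero]; simp
      · have hsv : 0 < Real.sqrt v := Real.sqrt_pos.2 hv0
        have hsvv : Real.sqrt v * Real.sqrt v = v := Real.mul_self_sqrt hv0.le
        have habs : ‖Bf T x v‖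
            = 2 / Real.pi * (Real.sqrt (T - v) / Real.sqrt v) * Real.exp (-x^2/(2*v)) := by
          unfold Bf
          rw [Real.norm_eq_abs, abs_mul, abs_mul, abs_neg,
            abs_of_nonneg (by positivity : (0:ℝ) ≤ 2 / Real.pi),
            abs_of_nonneg (by positivity), abs_of_nonneg (Real.exp_pos _).le]
        rw [habs, show 2 / Real.pi * (Real.sqrt (T - v) / Real.sqrt v) * Real.exp (-x^2/(2*v))
            = 2 / Real.pi * Real.sqrt (T - v) * Real.exp (-x^2/(2*v)) / Real.sqrt v by ring,
          div_le_iff₀ hsv,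
          show C * (v ^ 2 * Real.sqrt v) * Real.sqrt v = C * v ^ 3 by
            linear_combination C * v ^ 2 * hsvv]
        have he : Real.exp (-x^2/(2*v)) ≤ 27 * v ^ 3 / (x^2/2) ^ 3 := by
          rw [show -x^2/(2*v) = -(x^2/2/v) by ring]
          exact exp_bound (by positivity) hv0
        have hst : Real.sqrt (T - v) ≤ Real.sqrt T := by
          apply Real.sqrt_le_sqrt; linarith
        calc 2 / Real.pi * Real.sqrt (T - v) * Real.exp (-x^2/(2*v))
            ≤ 2 / Real.pi * Real.sqrt T * (27 * v ^ 3 / (x^2/2) ^ 3) := by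
              gcongr <;> positivity
          _ = C * v ^ 3 := by rw [hC]; ring
    · have : Continuous fun v : ℝ => C * (v ^ 2 * Real.sqrt v) := by
        continuity
      have h0' := this.tendsto 0
      simp only [ne_eq, Real.sqrt_zero, mul_zero, zero_pow, zero_mul] at h0'
      refine Filter.Tendsto.mono_left ?_ nhdsWithin_le_nhds
      simpa using h0'
  · -- u > 0
    have hsu : 0 < Real.sqrt u := Real.sqrt_pos.2 h0
    have h1 : ContinuousAt (fun v : ℝ => Real.sqrt (T - v)) u :=
      (Real.continuous_sqrt.comp (by continuity)).continuousAt
    have h2 : ContinuousAt (fun v : ℝ => Real.sqrt v) u := Real.continuous_sqrt.continuousAt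
    have h3 : ContinuousAt (fun v : ℝ => -x ^ 2 / (2 * v)) u :=
      ContinuousAt.div continuousAt_const (by fun_prop) (by positivity)
    exact ((continuousAt_const.mul (h1.div h2 (ne_of_gt hsu))).mul h3.rexp).continuousWithinAt

lemma exp_le_one' {x u : ℝ} (hu : 0 < u) : Real.exp (-x ^ 2 / (2 * u)) ≤ 1 := by
  rw [Real.exp_le_one_iff, neg_div]
  have : (0:ℝ) ≤ x ^ 2 / (2 * u) := by positivity
  linarith

lemma integrable_rho {T x : ℝ} (hT : 0 < T) (hx : 0 < x) :
    IntegrableOn (rho T x) (Set.Ioc (0:ℝ) T) := by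
  set c : ℝ := x ^ 2 / 2 with hc
  have hc0 : 0 < c := by rw [hc]; positivity
  set K : ℝ := 27 * T ^ 2 * Real.sqrt T / (Real.pi * c ^ 3) with hK
  have h1 : IntervalIntegrable (fun u : ℝ => u ^ (-(1:ℝ)/2)) volume 0 T :=
    intervalIntegral.intervalIntegrable_rpow' (by norm_num)
  have h2 := h1.comp_sub_left T
  rw [sub_self, sub_zero] at h2
  have hKint : IntegrableOn (fun u => K * (T - u) ^ (-(1:ℝ)/2)) (Set.Ioc 0 T) :=
    (h2.2).const_mul K
  apply Integrable.mono hKint ((meas_rho T x).aestronglyMeasurable.restrict)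
  filter_upwards [ae_restrict_mem measurableSet_Ioc] with u hu
  obtain ⟨hu0, huT⟩ := hu
  have hsu : 0 < Real.sqrt u := Real.sqrt_pos.2 hu0
  have hsuu : Real.sqrt u * Real.sqrt u = u := Real.mul_self_sqrt hu0.le
  have hπ := Real.pi_pos
  have hK0 : 0 ≤ K := by rw [hK]; positivity
  rcases eq_or_lt_of_le huT with hUT | hUT
  · -- u = T
    have : rho T x u = 0 := by
      unfold rho; rw [hUT, sub_self, Real.sqrt_zero, mul_zero, mul_zero, div_zero]
    rw [this, norm_zero]
    positivity
  · have hTu : 0 < T - u := by linarith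
    have hsb : 0 < Real.sqrt (T - u) := Real.sqrt_pos.2 hTu
    have hr : (T - u) ^ (-(1:ℝ)/2) = (Real.sqrt (T - u))⁻¹ := by
      rw [show (-(1:ℝ)/2) = -(1/2) by norm_num, Real.rpow_neg hTu.le, ← Real.sqrt_eq_rpow]
    rw [Real.norm_eq_abs, abs_of_nonneg (rho_nonneg T x u), Real.norm_eq_abs, hr,
      abs_of_nonneg (by positivity)]
    unfold rho
    rw [div_le_iff₀ (by positivity : 0 < Real.pi * (Real.sqrt u * Real.sqrt (T - u))),
      show K * (Real.sqrt (T - u))⁻¹ * (Real.pi * (Real.sqrt u * Real.sqrt (T - u)))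
        = K * Real.pi * Real.sqrt u * ((Real.sqrt (T - u))⁻¹ * Real.sqrt (T - u)) by ring,
      inv_mul_cancel₀ (ne_of_gt hsb), mul_one]
    have he : Real.exp (-x ^ 2 / (2 * u)) ≤ 27 * u ^ 3 / c ^ 3 := by
      rw [show -x ^ 2 / (2 * u) = -(c / u) by rw [hc]; ring]
      exact exp_bound hc0 hu0
    have k1 : u ^ 2 * Real.sqrt u ≤ T ^ 2 * Real.sqrt T :=
      mul_le_mul (pow_le_pow_left₀ hu0.le huT 2) (Real.sqrt_le_sqrt huT) hsu.le (by positivity)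
    have k2 : u ^ 3 ≤ T ^ 2 * Real.sqrt T * Real.sqrt u := by
      have h3 : u ^ 2 * Real.sqrt u * Real.sqrt u = u ^ 3 := by
        linear_combination u ^ 2 * hsuu
      nlinarith [mul_le_mul_of_nonneg_right k1 hsu.le]
    calc Real.exp (-x ^ 2 / (2 * u)) ≤ 27 * u ^ 3 / c ^ 3 := he
      _ ≤ 27 * (T ^ 2 * Real.sqrt T * Real.sqrt u) / c ^ 3 := by gcongr
      _ = K * Real.pi * Real.sqrt u := by rw [hK]; field_simp

lemma ibp {T x : ℝ} (hT : 0 < T) (hx : 0 < x) :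
    ∫ u in Set.Ioc (0:ℝ) T, phi' T x u = - ∫ u in Set.Ioc (0:ℝ) T, rho T x u := by
  have hint1 := integrable_phi' hT hx
  have hint2 := integrable_rho hT hx
  have hInt : IntervalIntegrable (fun u => phi' T x u + rho T x u) volume 0 T := by
    rw [intervalIntegrable_iff_integrableOn_Ioc_of_le hT.le]
    exact hint1.add hint2
  have hFTC := intervalIntegral.integral_eq_sub_of_hasDeriv_right_of_le hT.le
    (contOn_Bf hT hx)
    (fun u hu => (hasDerivAt_Bf hu.1 hu.2).hasDerivWithinAt) hInt
  rw [Bf_T, Bf_zero, sub_zero,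
    intervalIntegral.integral_of_le hT.le] at hFTC
  rw [integral_add hint1 hint2] at hFTC
  linarith

lemma rho_le_piece1 {T x u : ℝ} (hT : 0 < T) (hu : 0 < u) (huT : u ≤ T / 2) :
    rho T x u ≤ 1 / (Real.pi * Real.sqrt (T / 2)) * u ^ (-(1:ℝ)/2) := by
  have hπ := Real.pi_pos
  have hsu : 0 < Real.sqrt u := Real.sqrt_pos.2 hu
  have hsh : 0 < Real.sqrt (T / 2) := Real.sqrt_pos.2 (by linarith)
  have hsb : Real.sqrt (T / 2) ≤ Real.sqrt (T - u) := Real.sqrt_le_sqrt (by linarith)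
  have hr : u ^ (-(1:ℝ)/2) = (Real.sqrt u)⁻¹ := by
    rw [show (-(1:ℝ)/2) = -(1/2) by norm_num, Real.rpow_neg hu.le, ← Real.sqrt_eq_rpow]
  rw [hr]
  unfold rho
  calc Real.exp (-x ^ 2 / (2 * u)) / (Real.pi * (Real.sqrt u * Real.sqrt (T - u)))
      ≤ 1 / (Real.pi * (Real.sqrt u * Real.sqrt (T / 2))) := by
        apply div_le_div₀ (by norm_num) (exp_le_one' hu) (by positivity)
        gcongr
      _ = 1 / (Real.pi * Real.sqrt (T / 2)) * (Real.sqrt u)⁻¹ := by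
        field_simp

lemma rho_le_piece2 {T x u : ℝ} (hT : 0 < T) (hu : T / 2 < u) (huT : u ≤ T) :
    rho T x u ≤ 1 / (Real.pi * Real.sqrt (T / 2)) * (T - u) ^ (-(1:ℝ)/2) := by
  have hπ := Real.pi_pos
  have hu0 : 0 < u := by linarith
  have hsh : 0 < Real.sqrt (T / 2) := Real.sqrt_pos.2 (by linarith)
  rcases eq_or_lt_of_le huT with hUT | hUT
  · have h0 : rho T x u = 0 := by
      unfold rho; rw [hUT, sub_self, Real.sqrt_zero, mul_zero, mul_zero, div_zero]
    rw [h0, hUT, sub_self, Real.zero_rpow (by norm_num)]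
    simp
  · have hTu : 0 < T - u := by linarith
    have hsb : 0 < Real.sqrt (T - u) := Real.sqrt_pos.2 hTu
    have hsu : Real.sqrt (T / 2) ≤ Real.sqrt u := Real.sqrt_le_sqrt (by linarith)
    have hr : (T - u) ^ (-(1:ℝ)/2) = (Real.sqrt (T - u))⁻¹ := by
      rw [show (-(1:ℝ)/2) = -(1/2) by norm_num, Real.rpow_neg hTu.le, ← Real.sqrt_eq_rpow]
    rw [hr]
    unfold rho
    calc Real.exp (-x ^ 2 / (2 * u)) / (Real.pi * (Real.sqrt u * Real.sqrt (T - u)))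
        ≤ 1 / (Real.pi * (Real.sqrt (T / 2) * Real.sqrt (T - u))) := by
          apply div_le_div₀ (by norm_num) (exp_le_one' hu0) (by positivity)
          gcongr
        _ = 1 / (Real.pi * Real.sqrt (T / 2)) * (Real.sqrt (T - u))⁻¹ := by
          field_simp

lemma int_rpow_half {T : ℝ} (hT : 0 < T) :
    ∫ u in Set.Ioc (0:ℝ) (T / 2), u ^ (-(1:ℝ)/2) = 2 * Real.sqrt (T / 2) := by
  rw [← intervalIntegral.integral_of_le (by linarith)]
  rw [integral_rpow (Or.inl (by norm_num))]
  rw [Real.zero_rpow (by norm_num)]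
  rw [show (-(1:ℝ)/2 + 1) = 1/2 by norm_num, Real.sqrt_eq_rpow]
  ring

lemma rho_int_bound {T x : ℝ} (hT : 0 < T) (hx : 0 < x) :
    ∫ u in Set.Ioc (0:ℝ) T, rho T x u ≤ 4 / Real.pi := by
  have hπ := Real.pi_pos
  have hsh : 0 < Real.sqrt (T / 2) := Real.sqrt_pos.2 (by linarith)
  have hsplit : Set.Ioc (0:ℝ) (T / 2) ∪ Set.Ioc (T / 2) T = Set.Ioc 0 T :=
    Set.Ioc_union_Ioc_eq_Ioc (by linarith) (by linarith)
  have hint := integrable_rho hT hx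
  have hint1 : IntegrableOn (rho T x) (Set.Ioc 0 (T / 2)) :=
    hint.mono_set (Set.Ioc_subset_Ioc le_rfl (by linarith))
  have hint2 : IntegrableOn (rho T x) (Set.Ioc (T / 2) T) :=
    hint.mono_set (Set.Ioc_subset_Ioc (by linarith) le_rfl)
  rw [← hsplit, setIntegral_union (Set.Ioc_disjoint_Ioc_of_le le_rfl)
    measurableSet_Ioc hint1 hint2]
  have hmaj1 : IntegrableOn (fun u : ℝ => 1 / (Real.pi * Real.sqrt (T / 2)) * u ^ (-(1:ℝ)/2))
      (Set.Ioc 0 (T / 2)) := by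
    have hi1 : IntervalIntegrable (fun u : ℝ => u ^ (-(1:ℝ)/2)) volume 0 (T / 2) :=
      intervalIntegral.intervalIntegrable_rpow' (by norm_num)
    exact ((intervalIntegrable_iff_integrableOn_Ioc_of_le (by linarith)).1 hi1).const_mul _
  have hmaj2 : IntegrableOn (fun u : ℝ => 1 / (Real.pi * Real.sqrt (T / 2)) * (T - u) ^ (-(1:ℝ)/2))
      (Set.Ioc (T / 2) T) := by
    have hi1 : IntervalIntegrable (fun u : ℝ => u ^ (-(1:ℝ)/2)) volume 0 (T / 2) :=
      intervalIntegral.intervalIntegrable_rpow' (by norm_num)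
    have hi2 := hi1.comp_sub_left T
    rw [sub_zero, show T - T / 2 = T / 2 by ring] at hi2
    exact ((intervalIntegrable_iff_integrableOn_Ioc_of_le (by linarith)).1 hi2.symm).const_mul _
  have h1 : ∫ u in Set.Ioc (0:ℝ) (T / 2), rho T x u
      ≤ ∫ u in Set.Ioc (0:ℝ) (T / 2), 1 / (Real.pi * Real.sqrt (T / 2)) * u ^ (-(1:ℝ)/2) :=
    setIntegral_mono_on hint1 hmaj1 measurableSet_Ioc
      (fun u hu => rho_le_piece1 hT hu.1 hu.2)
  have h2 : ∫ u in Set.Ioc (T / 2) T, rho T x u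
      ≤ ∫ u in Set.Ioc (T / 2) T, 1 / (Real.pi * Real.sqrt (T / 2)) * (T - u) ^ (-(1:ℝ)/2) :=
    setIntegral_mono_on hint2 hmaj2 measurableSet_Ioc
      (fun u hu => rho_le_piece2 hT hu.1 hu.2)
  have v1 : ∫ u in Set.Ioc (0:ℝ) (T / 2), 1 / (Real.pi * Real.sqrt (T / 2)) * u ^ (-(1:ℝ)/2)
      = 2 / Real.pi := by
    rw [MeasureTheory.integral_const_mul, int_rpow_half hT]
    field_simp
  have v2 : ∫ u in Set.Ioc (T / 2) T, 1 / (Real.pi * Real.sqrt (T / 2)) * (T - u) ^ (-(1:ℝ)/2)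
      = 2 / Real.pi := by
    rw [MeasureTheory.integral_const_mul, ← intervalIntegral.integral_of_le (by linarith : T / 2 ≤ T)]
    have := intervalIntegral.integral_comp_sub_left (a := T/2) (b := T)
      (fun u : ℝ => u ^ (-(1:ℝ)/2)) T
    rw [this, sub_self, show T - T / 2 = T / 2 by ring,
      intervalIntegral.integral_of_le (by linarith : (0:ℝ) ≤ T / 2), int_rpow_half hT]
    field_simp
  rw [v1] at h1
  rw [v2] at h2
  have : (4:ℝ) / Real.pi = 2 / Real.pi + 2 / Real.pi := by ring
  linarith

end GfunAux


/-- The spatial partial derivative of `G` is uniformly bounded: `|∂G/∂x (x,t)| ≤ 2ν`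
for all `x ≠ 0` and `t > 0`. -/
theorem abs_deriv_Gfun_le (ν x t : ℝ) (hν : 0 < ν) (hx : x ≠ 0) (ht : 0 < t) :
    |deriv (fun y : ℝ => Gfun ν y t) x| ≤ 2 * ν := by
  have key : ∀ z : ℝ, 0 < z → |deriv (fun y : ℝ => Gfun ν y t) z| ≤ 2 * ν := by
    intro z hz
    have hT : 0 < 2 * t := by linarith
    have hJ := GfunAux.hasDerivAt_int hT hz
    have hG : HasDerivAt (fun y : ℝ => Gfun ν y t)
        (Real.sqrt 2 * ν * ∫ u in Set.Ioc (0:ℝ) (2*t), GfunAux.phi' (2*t) z u) z := by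
      refine (hJ.const_mul (Real.sqrt 2 * ν)).congr_of_eventuallyEq ?_
      filter_upwards [Ioi_mem_nhds hz] with y hy
      exact GfunAux.rep hy ht
    rw [hG.deriv, GfunAux.ibp hT hz]
    set I := ∫ u in Set.Ioc (0:ℝ) (2*t), GfunAux.rho (2*t) z u with hI
    have h1 : 0 ≤ I :=
      MeasureTheory.setIntegral_nonneg measurableSet_Ioc fun u _ => GfunAux.rho_nonneg _ _ _
    have h2 : I ≤ 4 / Real.pi := GfunAux.rho_int_bound hT hz
    rw [show Real.sqrt 2 * ν * -I = -(Real.sqrt 2 * ν * I) by ring, abs_neg,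
      abs_of_nonneg (mul_nonneg (mul_nonneg (Real.sqrt_nonneg 2) hν.le) h1)]
    have hs : Real.sqrt 2 ≤ 1.5 := by
      nlinarith [Real.sq_sqrt (by norm_num : (0:ℝ) ≤ 2), Real.sqrt_nonneg 2]
    have hI3 : I ≤ 4 / 3 := by
      refine h2.trans ?_
      rw [div_le_div_iff₀ Real.pi_pos (by norm_num)]
      nlinarith [Real.pi_gt_three]
    have hsI : Real.sqrt 2 * I ≤ 2 := by
      calc Real.sqrt 2 * I ≤ 1.5 * (4 / 3) :=
            mul_le_mul hs hI3 h1 (by norm_num)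
        _ = 2 := by norm_num
    nlinarith [mul_le_mul_of_nonneg_left hsI hν.le]
  rcases hx.lt_or_gt with h | h
  · have heven : ∀ y : ℝ, Gfun ν (-y) t = Gfun ν y t := fun y => by
      simp [Gfun, neg_sq]
    have hd : deriv (fun y : ℝ => Gfun ν y t) x
        = - deriv (fun y : ℝ => Gfun ν y t) (-x) :=
      calc deriv (fun y : ℝ => Gfun ν y t) x
          = deriv (fun y : ℝ => Gfun ν (-y) t) x := by
            rw [show (fun y : ℝ => Gfun ν (-y) t) = (fun y : ℝ => Gfun ν y t) from
              funext heven]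
        _ = - deriv (fun y : ℝ => Gfun ν y t) (-x) :=
            deriv_comp_neg (fun w : ℝ => Gfun ν w t) x
    rw [hd, abs_neg]
    exact key (-x) (by linarith)
  · exact key x h
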